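/- If for each k ∈ Z[1,N] there exist β > α₁ and constants such that F(k,s) ≥ ((β−ε)/2)s² + C for all s ∈ ℝ (where ε = (β−α₁)/2 and C ∈ ℝ), then J(y) ≥ (ε/2)‖y‖² + NC for all y ∈ E; in particular J is coercive. -/

import Mathlib

open Finset Matrix

/-- Forward difference `Δy(k) = y(k+1) - y(k)`. -/
def fd (y : ℤ → ℝ) (k : ℤ) : ℝ := y (k + 1) - y k

/-- Second forward difference `Δ²y(k) = y(k+2) - 2y(k+1) + y(k)`. -/
def fd2 (y : ℤ → ℝ) (k : ℤ) : ℝ := y (k + 2) - 2 * y (k + 1) + y k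

/-- Dirichlet boundary conditions `y(-1) = y(0) = y(N+1) = y(N+2) = 0`. -/
def bc (N : ℕ) (y : ℤ → ℝ) : Prop :=
  y (-1) = 0 ∧ y 0 = 0 ∧ y ((N : ℤ) + 1) = 0 ∧ y ((N : ℤ) + 2) = 0

/-- `y` satisfies `Δ²(p(k)Δ²y(k-2)) + Δ(q(k)Δy(k-1)) + f(k,y(k)) = 0` for `k ∈ Z[1,N]`. -/
def solves (N : ℕ) (p q : ℤ → ℝ) (f : ℤ → ℝ → ℝ) (y : ℤ → ℝ) : Prop :=
  ∀ k ∈ Finset.Icc (1 : ℤ) (N : ℤ),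
    fd2 (fun j => p j * fd2 y (j - 2)) k
      + fd (fun j => q j * fd y (j - 1)) k + f k (y k) = 0

/-- `F(k,s) = ∫₀ˢ f(k,t) dt`. -/
noncomputable def Fint (f : ℤ → ℝ → ℝ) (k : ℤ) (s : ℝ) : ℝ := ∫ t in (0 : ℝ)..s, f k t

/-- The energy functional
`J(y) = ∑_{k=1}^{N+2} (p(k)/2)(Δ²y(k-2))² − ∑_{k=1}^{N+1} (q(k)/2)(Δy(k-1))² + ∑_{k=1}^{N} F(k,y(k))`. -/
noncomputable def J (N : ℕ) (p q : ℤ → ℝ) (f : ℤ → ℝ → ℝ) (y : ℤ → ℝ) : ℝ :=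
  ∑ k ∈ Finset.Icc (1 : ℤ) ((N : ℤ) + 2), p k / 2 * (fd2 y (k - 2)) ^ 2
    - ∑ k ∈ Finset.Icc (1 : ℤ) ((N : ℤ) + 1), q k / 2 * (fd y (k - 1)) ^ 2
    + ∑ k ∈ Finset.Icc (1 : ℤ) (N : ℤ), Fint f k (y k)

open Matrix

/-- The (N+1)×N first-difference matrix under zero boundary conditions. -/
def Vmat (N : ℕ) : Matrix (Fin (N + 1)) (Fin N) ℝ := fun i j =>
  if (i : ℕ) = (j : ℕ) then 1 else if (i : ℕ) = (j : ℕ) + 1 then -1 else 0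

/-- The (N+2)×N second-difference matrix under zero boundary conditions. -/
def Wmat (N : ℕ) : Matrix (Fin (N + 2)) (Fin N) ℝ := fun i j =>
  if (i : ℕ) = (j : ℕ) then 1
  else if (i : ℕ) = (j : ℕ) + 1 then -2
  else if (i : ℕ) = (j : ℕ) + 2 then 1 else 0

/-- `lam` is the smallest eigenvalue of the matrix `M`. -/
def IsSmallestEigenvalue {n : ℕ} (M : Matrix (Fin n) (Fin n) ℝ) (lam : ℝ) : Prop :=
  IsLeast {μ : ℝ | ∃ x : Fin n → ℝ, x ≠ 0 ∧ M.mulVec x = μ • x} lam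

section Helpers

lemma rayleigh_bound {n m : ℕ} (hn : 0 < n) (A : Matrix (Fin m) (Fin n) ℝ) (lam : ℝ)
    (h : IsSmallestEigenvalue (Aᵀ * A) lam) (x : Fin n → ℝ) :
    lam * ∑ i, x i ^ 2 ≤ ∑ i, (A.mulVec x i) ^ 2 := by
  classical
  set M := Aᵀ * A with hM
  have hdot : ∀ u : Fin n → ℝ, u ⬝ᵥ M.mulVec u = ∑ i, (A.mulVec u i) ^ 2 := by
    intro u
    rw [hM, ← Matrix.mulVec_mulVec, Matrix.dotProduct_mulVec, Matrix.vecMul_transpose,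
      dotProduct]
    exact Finset.sum_congr rfl fun i _ => (sq (A.mulVec u i)).symm
  have hdotnn : ∀ u : Fin n → ℝ, 0 ≤ u ⬝ᵥ M.mulVec u := by
    intro u; rw [hdot]; positivity
  by_cases hx : x = 0
  · simp [hx]
  haveI : Nonempty (Fin n) := ⟨⟨0, hn⟩⟩
  haveI : Nontrivial (EuclideanSpace ℝ (Fin n)) := by infer_instance
  have hHerm : M.IsHermitian := by
    rw [hM]; simpa using Matrix.isHermitian_conjTranspose_mul_self A
  have hSym : (Matrix.toEuclideanLin M).IsSymmetric :=
    Matrix.isHermitian_iff_isSymmetric.mp hHerm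
  set T := Matrix.toEuclideanLin M with hT
  have hinner : ∀ u : EuclideanSpace ℝ (Fin n),
      (inner ℝ (T u) u : ℝ)
        = ((WithLp.equiv 2 (Fin n → ℝ)) u) ⬝ᵥ M.mulVec ((WithLp.equiv 2 (Fin n → ℝ)) u) := by
    intro u
    rw [PiLp.inner_apply]
    simp only [RCLike.inner_apply, conj_trivial]
    rw [dotProduct]
    exact Finset.sum_congr rfl fun i _ => by rfl
  set c : ℝ := ⨅ u : { u : EuclideanSpace ℝ (Fin n) // u ≠ 0 },
      RCLike.re (inner ℝ (T u) (u : EuclideanSpace ℝ (Fin n)) : ℝ)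
        / ‖(u : EuclideanSpace ℝ (Fin n))‖ ^ 2 with hc
  have hEig : Module.End.HasEigenvalue T (c : ℝ) := by
    have := hSym.hasEigenvalue_iInf_of_finiteDimensional
    exact this
  have hbdd : BddBelow (Set.range fun u : { u : EuclideanSpace ℝ (Fin n) // u ≠ 0 } =>
      RCLike.re (inner ℝ (T u) (u : EuclideanSpace ℝ (Fin n)) : ℝ)
        / ‖(u : EuclideanSpace ℝ (Fin n))‖ ^ 2) := by
    refine ⟨0, ?_⟩
    rintro r ⟨u, rfl⟩
    have h1 : (0:ℝ) ≤ RCLike.re (inner ℝ (T u) (u : EuclideanSpace ℝ (Fin n)) : ℝ) := by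
      simp only [RCLike.re_to_real]
      rw [hinner]; exact hdotnn _
    positivity
  have hlamc : lam ≤ c := by
    obtain ⟨v, hv⟩ := hEig.exists_hasEigenvector
    refine h.2 ⟨(WithLp.equiv 2 (Fin n → ℝ)) v, ?_, ?_⟩
    · simpa using hv.right
    · have := hv.apply_eq_smul
      exact congrArg (WithLp.equiv 2 (Fin n → ℝ)) this
  set xE : EuclideanSpace ℝ (Fin n) := (WithLp.equiv 2 (Fin n → ℝ)).symm x with hxE
  have hxE0 : xE ≠ 0 := by simpa [hxE] using hx
  have hcx : c ≤ RCLike.re (inner ℝ (T xE) xE : ℝ) / ‖xE‖ ^ 2 :=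
    ciInf_le hbdd ⟨xE, hxE0⟩
  have hnorm : ‖xE‖ ^ 2 = ∑ i, x i ^ 2 := by
    rw [EuclideanSpace.norm_eq]
    rw [Real.sq_sqrt (by positivity)]
    exact Finset.sum_congr rfl fun i _ => by rw [Real.norm_eq_abs, sq_abs]; rfl
  have hnormpos : 0 < ∑ i, x i ^ 2 := by
    rw [← hnorm]
    have : ‖xE‖ ≠ 0 := norm_ne_zero_iff.mpr hxE0
    positivity
  have hray : RCLike.re (inner ℝ (T xE) xE : ℝ) = ∑ i, (A.mulVec x i) ^ 2 := by
    simp only [RCLike.re_to_real]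
    rw [hinner, ← hdot]
    rfl
  calc lam * ∑ i, x i ^ 2 ≤ c * ∑ i, x i ^ 2 :=
        mul_le_mul_of_nonneg_right hlamc hnormpos.le
    _ ≤ (RCLike.re (inner ℝ (T xE) xE : ℝ) / ‖xE‖ ^ 2) * ∑ i, x i ^ 2 :=
        mul_le_mul_of_nonneg_right hcx hnormpos.le
    _ = ∑ i, (A.mulVec x i) ^ 2 := by
        rw [hray, hnorm]; field_simp

lemma sum_Icc_fin (m : ℕ) (g : ℤ → ℝ) :
    ∑ k ∈ Finset.Icc (1:ℤ) (m:ℤ), g k = ∑ i : Fin m, g ((i:ℤ)+1) := by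
  rw [Fin.sum_univ_eq_sum_range (fun i => g ((i:ℤ)+1))]
  induction m with
  | zero => simp
  | succ n ih =>
      rw [Finset.sum_range_succ, ← ih]
      push_cast
      have h : Finset.Icc (1:ℤ) ((n:ℤ)+1) = insert ((n:ℤ)+1) (Finset.Icc 1 (n:ℤ)) := by
        ext k; simp only [Finset.mem_Icc, Finset.mem_insert]; omega
      rw [h, Finset.sum_insert (by simp), add_comm]

lemma sum_shift (a b c : ℤ) (g : ℤ → ℝ) :
    ∑ k ∈ Finset.Icc a b, g (k - c) = ∑ k ∈ Finset.Icc (a-c) (b-c), g k := by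
  have h : Finset.Icc a b = Finset.map (addRightEmbedding c) (Finset.Icc (a-c) (b-c)) := by
    rw [Finset.map_add_right_Icc]; congr 1 <;> ring
  rw [h, Finset.sum_map]
  simp

lemma sum_sq_bc {N : ℕ} {y : ℤ → ℝ} (hy : bc N y)
    (a b : ℤ) (ha : -1 ≤ a) (hab : a ≤ 1) (hb : (N:ℤ) ≤ b) (hb2 : b ≤ (N:ℤ)+2) :
    ∑ k ∈ Finset.Icc a b, y k ^ 2 = ∑ k ∈ Finset.Icc (1:ℤ) (N:ℤ), y k ^ 2 := by
  rw [← Finset.sum_subset (Finset.Icc_subset_Icc hab hb)]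
  intro k hk hk'
  simp only [Finset.mem_Icc] at hk hk'
  have : k = -1 ∨ k = 0 ∨ k = (N:ℤ)+1 ∨ k = (N:ℤ)+2 := by omega
  rcases this with h|h|h|h <;> rw [h] <;>
    simp [hy.1, hy.2.1, hy.2.2.1, hy.2.2.2]

lemma sum_if_shift {N : ℕ} (d c : ℕ) (g : ℕ → ℝ) :
    ∑ j : Fin N, (if c = (j:ℕ) + d then g (j:ℕ) else 0)
      = if d ≤ c ∧ c - d < N then g (c - d) else 0 := by
  by_cases h : d ≤ c ∧ c - d < N
  · rw [if_pos h]
    rw [Finset.sum_eq_single_of_mem (⟨c - d, h.2⟩ : Fin N) (Finset.mem_univ _)]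
    · have hcond : c = ((⟨c - d, h.2⟩ : Fin N) : ℕ) + d := by
        simp only [Fin.val_mk]; omega
      rw [if_pos hcond]
    · intro j _ hj
      rw [if_neg]
      intro hc
      apply hj
      apply Fin.ext
      show (j:ℕ) = c - d
      omega
  · rw [if_neg h]
    apply Finset.sum_eq_zero
    intro j _
    rw [if_neg]
    intro hc
    exact h ⟨by omega, by have := j.isLt; omega⟩

lemma wmul {N : ℕ} {y : ℤ → ℝ} (hy : bc N y) (i : Fin (N+2)) :
    (Wmat N).mulVec (fun j => y ((j:ℤ)+1)) i
      = y ((i:ℤ)+1) - 2 * y (i:ℤ) + y ((i:ℤ)-1) := by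
  obtain ⟨h1, h2, h3, h4⟩ := hy
  have key : ∀ j : Fin N, Wmat N i j * y ((j:ℤ)+1) =
      (if (i:ℕ) = (j:ℕ) + 0 then (fun m : ℕ => y ((m:ℤ)+1)) (j:ℕ) else 0)
      + (if (i:ℕ) = (j:ℕ) + 1 then (fun m : ℕ => -2 * y ((m:ℤ)+1)) (j:ℕ) else 0)
      + (if (i:ℕ) = (j:ℕ) + 2 then (fun m : ℕ => y ((m:ℤ)+1)) (j:ℕ) else 0) := by
    intro j
    simp only [Wmat]
    split_ifs <;> first | omega | ring
  rw [Matrix.mulVec, dotProduct]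
  rw [Finset.sum_congr rfl (fun j _ => key j)]
  rw [Finset.sum_add_distrib, Finset.sum_add_distrib,
    sum_if_shift 0 (i:ℕ) (fun m : ℕ => y ((m:ℤ)+1)),
    sum_if_shift 1 (i:ℕ) (fun m : ℕ => -2 * y ((m:ℤ)+1)),
    sum_if_shift 2 (i:ℕ) (fun m : ℕ => y ((m:ℤ)+1))]
  have hlt := i.isLt
  have e0 : (if 0 ≤ (i:ℕ) ∧ (i:ℕ) - 0 < N then y ((((i:ℕ) - 0 : ℕ):ℤ)+1) else 0)
      = y ((i:ℤ)+1) := by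
    by_cases h : (i:ℕ) < N
    · rw [if_pos ⟨Nat.zero_le _, by omega⟩,
        show ((((i:ℕ) - 0 : ℕ):ℤ)+1) = (i:ℤ)+1 by omega]
    · rw [if_neg (by omega)]
      have : (i:ℕ) = N ∨ (i:ℕ) = N + 1 := by omega
      rcases this with h'|h'
      · rw [show ((i:ℤ)+1) = (N:ℤ)+1 by omega, h3]
      · rw [show ((i:ℤ)+1) = (N:ℤ)+2 by omega, h4]
  have e1 : (if 1 ≤ (i:ℕ) ∧ (i:ℕ) - 1 < N then -2 * y ((((i:ℕ) - 1 : ℕ):ℤ)+1) else 0)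
      = -2 * y (i:ℤ) := by
    by_cases h : 1 ≤ (i:ℕ) ∧ (i:ℕ) - 1 < N
    · rw [if_pos h, show ((((i:ℕ) - 1 : ℕ):ℤ)+1) = (i:ℤ) by omega]
    · rw [if_neg h]
      have : (i:ℕ) = 0 ∨ (i:ℕ) = N + 1 := by omega
      rcases this with h'|h'
      · rw [show ((i:ℤ)) = (0:ℤ) by omega, h2]; ring
      · rw [show ((i:ℤ)) = (N:ℤ)+1 by omega, h3]; ring
  have e2 : (if 2 ≤ (i:ℕ) ∧ (i:ℕ) - 2 < N then y ((((i:ℕ) - 2 : ℕ):ℤ)+1) else 0)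
      = y ((i:ℤ)-1) := by
    by_cases h : 2 ≤ (i:ℕ) ∧ (i:ℕ) - 2 < N
    · rw [if_pos h, show ((((i:ℕ) - 2 : ℕ):ℤ)+1) = (i:ℤ)-1 by omega]
    · rw [if_neg h]
      have : (i:ℕ) = 0 ∨ (i:ℕ) = 1 := by omega
      rcases this with h'|h'
      · rw [show ((i:ℤ)-1) = (-1:ℤ) by omega, h1]
      · rw [show ((i:ℤ)-1) = (0:ℤ) by omega, h2]
  rw [e0, e1, e2]
  ring

lemma vmul {N : ℕ} {y : ℤ → ℝ} (hy : bc N y) (i : Fin (N+1)) :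
    (Vmat N).mulVec (fun j => y ((j:ℤ)+1)) i = y ((i:ℤ)+1) - y (i:ℤ) := by
  obtain ⟨h1, h2, h3, h4⟩ := hy
  have key : ∀ j : Fin N, Vmat N i j * y ((j:ℤ)+1) =
      (if (i:ℕ) = (j:ℕ) + 0 then (fun m : ℕ => y ((m:ℤ)+1)) (j:ℕ) else 0)
      + (if (i:ℕ) = (j:ℕ) + 1 then (fun m : ℕ => -y ((m:ℤ)+1)) (j:ℕ) else 0) := by
    intro j
    simp only [Vmat]
    split_ifs <;> first | omega | ring
  rw [Matrix.mulVec, dotProduct]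
  rw [Finset.sum_congr rfl (fun j _ => key j)]
  rw [Finset.sum_add_distrib,
    sum_if_shift 0 (i:ℕ) (fun m : ℕ => y ((m:ℤ)+1)),
    sum_if_shift 1 (i:ℕ) (fun m : ℕ => -y ((m:ℤ)+1))]
  have hlt := i.isLt
  have e0 : (if 0 ≤ (i:ℕ) ∧ (i:ℕ) - 0 < N then y ((((i:ℕ) - 0 : ℕ):ℤ)+1) else 0)
      = y ((i:ℤ)+1) := by
    by_cases h : (i:ℕ) < N
    · rw [if_pos ⟨Nat.zero_le _, by omega⟩,
        show ((((i:ℕ) - 0 : ℕ):ℤ)+1) = (i:ℤ)+1 by omega]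
    · rw [if_neg (by omega)]
      rw [show ((i:ℤ)+1) = (N:ℤ)+1 by omega, h3]
  have e1 : (if 1 ≤ (i:ℕ) ∧ (i:ℕ) - 1 < N then -y ((((i:ℕ) - 1 : ℕ):ℤ)+1) else 0)
      = -y (i:ℤ) := by
    by_cases h : 1 ≤ (i:ℕ) ∧ (i:ℕ) - 1 < N
    · rw [if_pos h, show ((((i:ℕ) - 1 : ℕ):ℤ)+1) = (i:ℤ) by omega]
    · rw [if_neg h]
      rw [show ((i:ℤ)) = (0:ℤ) by omega, h2]; ring
  rw [e0, e1]
  ring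

end Helpers

set_option maxHeartbeats 2000000 in
/-- If `F(k,s) ≥ ((β−ε)/2)s² + C` for all `s`, with `β > α₁` and
`ε = (β−α₁)/2`, then `J(y) ≥ (ε/2)‖y‖² + NC` for all `y ∈ E`; in particular `J`
is coercive. -/
theorem stmt_15 (N : ℕ) (hN : 1 ≤ N) (p q : ℤ → ℝ) (f : ℤ → ℝ → ℝ)
    (hf : ∀ k ∈ Finset.Icc (1 : ℤ) (N : ℤ), Continuous (f k))
    (lam1 lam2 : ℝ)
    (hlam1 : IsSmallestEigenvalue ((Vmat N)ᵀ * Vmat N) lam1)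
    (hlam2 : IsSmallestEigenvalue ((Wmat N)ᵀ * Wmat N) lam2)
    (pmin qmax : ℝ)
    (hpmin : IsLeast (p '' Set.Icc (1 : ℤ) ((N : ℤ) + 2)) pmin)
    (hqmax : IsGreatest (q '' Set.Icc (1 : ℤ) ((N : ℤ) + 1)) qmax)
    (alpha1 : ℝ)
    (halpha1 : alpha1 = (if qmax < 0 then lam1 else 4) * qmax
        - (if 0 ≤ pmin then lam2 else 16) * pmin)
    (beta eps C : ℝ) (hbeta : alpha1 < beta) (heps : eps = (beta - alpha1) / 2)
    (hF : ∀ k ∈ Finset.Icc (1 : ℤ) (N : ℤ), ∀ s : ℝ,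
      (beta - eps) / 2 * s ^ 2 + C ≤ Fint f k s) :
    (∀ y : ℤ → ℝ, bc N y →
        eps / 2 * ∑ k ∈ Finset.Icc (1 : ℤ) (N : ℤ), (y k) ^ 2 + N * C
          ≤ J N p q f y)
      ∧ ∀ C' : ℝ, ∃ R : ℝ, ∀ y : ℤ → ℝ, bc N y →
          R ≤ ∑ k ∈ Finset.Icc (1 : ℤ) (N : ℤ), (y k) ^ 2 → C' ≤ J N p q f y := by
  have heps_pos : 0 < eps := by rw [heps]; linarith
  have main : ∀ y : ℤ → ℝ, bc N y →
      eps / 2 * ∑ k ∈ Finset.Icc (1 : ℤ) (N : ℤ), (y k) ^ 2 + N * C ≤ J N p q f y := by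
    intro y hy
    set S : ℝ := ∑ k ∈ Finset.Icc (1 : ℤ) (N : ℤ), (y k) ^ 2 with hSdef
    set x : Fin N → ℝ := fun j => y ((j:ℤ)+1) with hxdef
    have hS : S = ∑ j : Fin N, x j ^ 2 := by
      rw [hSdef, sum_Icc_fin N (fun k => y k ^ 2)]
    -- A2 identity
    have hA2 : ∑ k ∈ Finset.Icc (1:ℤ) ((N:ℤ)+2), (fd2 y (k-2)) ^ 2
        = ∑ i : Fin (N+2), ((Wmat N).mulVec x i) ^ 2 := by
      have h1 := sum_Icc_fin (N+2) (fun k => (fd2 y (k-2)) ^ 2)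
      rw [show (((N+2:ℕ)):ℤ) = (N:ℤ)+2 by push_cast; ring] at h1
      rw [h1]
      apply Finset.sum_congr rfl
      intro i _
      congr 1
      rw [wmul hy i]
      simp only [fd2]
      rw [show (i:ℤ)+1-2+2 = (i:ℤ)+1 by ring, show (i:ℤ)+1-2+1 = (i:ℤ) by ring,
        show (i:ℤ)+1-2 = (i:ℤ)-1 by ring]
    have hA1 : ∑ k ∈ Finset.Icc (1:ℤ) ((N:ℤ)+1), (fd y (k-1)) ^ 2
        = ∑ i : Fin (N+1), ((Vmat N).mulVec x i) ^ 2 := by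
      have h1 := sum_Icc_fin (N+1) (fun k => (fd y (k-1)) ^ 2)
      rw [show (((N+1:ℕ)):ℤ) = (N:ℤ)+1 by push_cast; ring] at h1
      rw [h1]
      apply Finset.sum_congr rfl
      intro i _
      congr 1
      rw [vmul hy i]
      simp only [fd]
      rw [show (i:ℤ)+1-1+1 = (i:ℤ)+1 by ring, show (i:ℤ)+1-1 = (i:ℤ) by ring]
    -- eigenvalue lower bounds
    have hWlow : lam2 * S ≤ ∑ k ∈ Finset.Icc (1:ℤ) ((N:ℤ)+2), (fd2 y (k-2)) ^ 2 := by
      rw [hA2, hS]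
      exact rayleigh_bound hN (Wmat N) lam2 hlam2 x
    have hVlow : lam1 * S ≤ ∑ k ∈ Finset.Icc (1:ℤ) ((N:ℤ)+1), (fd y (k-1)) ^ 2 := by
      rw [hA1, hS]
      exact rayleigh_bound hN (Vmat N) lam1 hlam1 x
    -- upper bounds (Gershgorin-type)
    have shift0 : ∑ k ∈ Finset.Icc (1:ℤ) ((N:ℤ)+2), y k ^ 2 = S :=
      sum_sq_bc hy 1 ((N:ℤ)+2) (by omega) le_rfl (by omega) le_rfl
    have shift1 : ∑ k ∈ Finset.Icc (1:ℤ) ((N:ℤ)+2), y (k-1) ^ 2 = S := by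
      rw [sum_shift 1 ((N:ℤ)+2) 1 (fun k => y k ^ 2)]
      exact sum_sq_bc hy (1-1) ((N:ℤ)+2-1) (by omega) (by omega) (by omega) (by omega)
    have shift2 : ∑ k ∈ Finset.Icc (1:ℤ) ((N:ℤ)+2), y (k-2) ^ 2 = S := by
      rw [sum_shift 1 ((N:ℤ)+2) 2 (fun k => y k ^ 2)]
      exact sum_sq_bc hy (1-2) ((N:ℤ)+2-2) (by omega) (by omega) (by omega) (by omega)
    have shift0' : ∑ k ∈ Finset.Icc (1:ℤ) ((N:ℤ)+1), y k ^ 2 = S :=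
      sum_sq_bc hy 1 ((N:ℤ)+1) (by omega) le_rfl (by omega) (by omega)
    have shift1' : ∑ k ∈ Finset.Icc (1:ℤ) ((N:ℤ)+1), y (k-1) ^ 2 = S := by
      rw [sum_shift 1 ((N:ℤ)+1) 1 (fun k => y k ^ 2)]
      exact sum_sq_bc hy (1-1) ((N:ℤ)+1-1) (by omega) (by omega) (by omega) (by omega)
    have hWup : ∑ k ∈ Finset.Icc (1:ℤ) ((N:ℤ)+2), (fd2 y (k-2)) ^ 2 ≤ 16 * S := by
      have hpt : ∀ k ∈ Finset.Icc (1:ℤ) ((N:ℤ)+2),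
          (fd2 y (k-2)) ^ 2 ≤ 4 * y k ^ 2 + 8 * y (k-1) ^ 2 + 4 * y (k-2) ^ 2 := by
        intro k _
        simp only [fd2]
        rw [show (k-2)+2 = k by ring, show (k-2)+1 = k-1 by ring]
        nlinarith [sq_nonneg (y k + y (k-1)), sq_nonneg (y (k-1) + y (k-2)),
          sq_nonneg (y k - y (k-2)), sq_nonneg (y k + y (k-2))]
      calc ∑ k ∈ Finset.Icc (1:ℤ) ((N:ℤ)+2), (fd2 y (k-2)) ^ 2
          ≤ ∑ k ∈ Finset.Icc (1:ℤ) ((N:ℤ)+2),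
            (4 * y k ^ 2 + 8 * y (k-1) ^ 2 + 4 * y (k-2) ^ 2) :=
            Finset.sum_le_sum hpt
        _ = 4 * (∑ k ∈ Finset.Icc (1:ℤ) ((N:ℤ)+2), y k ^ 2)
            + 8 * (∑ k ∈ Finset.Icc (1:ℤ) ((N:ℤ)+2), y (k-1) ^ 2)
            + 4 * (∑ k ∈ Finset.Icc (1:ℤ) ((N:ℤ)+2), y (k-2) ^ 2) := by
            rw [Finset.sum_add_distrib, Finset.sum_add_distrib,
              ← Finset.mul_sum, ← Finset.mul_sum, ← Finset.mul_sum]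
        _ = 16 * S := by rw [shift0, shift1, shift2]; ring
    have hVup : ∑ k ∈ Finset.Icc (1:ℤ) ((N:ℤ)+1), (fd y (k-1)) ^ 2 ≤ 4 * S := by
      have hpt : ∀ k ∈ Finset.Icc (1:ℤ) ((N:ℤ)+1),
          (fd y (k-1)) ^ 2 ≤ 2 * y k ^ 2 + 2 * y (k-1) ^ 2 := by
        intro k _
        simp only [fd]
        rw [show (k-1)+1 = k by ring]
        nlinarith [sq_nonneg (y k + y (k-1))]
      calc ∑ k ∈ Finset.Icc (1:ℤ) ((N:ℤ)+1), (fd y (k-1)) ^ 2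
          ≤ ∑ k ∈ Finset.Icc (1:ℤ) ((N:ℤ)+1),
            (2 * y k ^ 2 + 2 * y (k-1) ^ 2) := Finset.sum_le_sum hpt
        _ = 2 * (∑ k ∈ Finset.Icc (1:ℤ) ((N:ℤ)+1), y k ^ 2)
            + 2 * (∑ k ∈ Finset.Icc (1:ℤ) ((N:ℤ)+1), y (k-1) ^ 2) := by
            rw [Finset.sum_add_distrib, ← Finset.mul_sum, ← Finset.mul_sum]
        _ = 4 * S := by rw [shift0', shift1']; ring
    -- term bounds
    have hT1 : pmin / 2 * (∑ k ∈ Finset.Icc (1:ℤ) ((N:ℤ)+2), (fd2 y (k-2)) ^ 2)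
        ≤ ∑ k ∈ Finset.Icc (1:ℤ) ((N:ℤ)+2), p k / 2 * (fd2 y (k-2)) ^ 2 := by
      rw [Finset.mul_sum]
      apply Finset.sum_le_sum
      intro k hk
      have hk' : k ∈ Set.Icc (1:ℤ) ((N:ℤ)+2) := by
        rw [Set.mem_Icc]; exact Finset.mem_Icc.mp hk
      have hle : pmin ≤ p k := hpmin.2 ⟨k, hk', rfl⟩
      have := sq_nonneg (fd2 y (k-2))
      nlinarith
    have hT2 : ∑ k ∈ Finset.Icc (1:ℤ) ((N:ℤ)+1), q k / 2 * (fd y (k-1)) ^ 2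
        ≤ qmax / 2 * (∑ k ∈ Finset.Icc (1:ℤ) ((N:ℤ)+1), (fd y (k-1)) ^ 2) := by
      rw [Finset.mul_sum]
      apply Finset.sum_le_sum
      intro k hk
      have hk' : k ∈ Set.Icc (1:ℤ) ((N:ℤ)+1) := by
        rw [Set.mem_Icc]; exact Finset.mem_Icc.mp hk
      have hle : q k ≤ qmax := hqmax.2 ⟨k, hk', rfl⟩
      have := sq_nonneg (fd y (k-1))
      nlinarith
    have hT3 : (beta - eps) / 2 * S + N * C
        ≤ ∑ k ∈ Finset.Icc (1:ℤ) (N:ℤ), Fint f k (y k) := by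
      have h1 : ∑ k ∈ Finset.Icc (1:ℤ) (N:ℤ), ((beta - eps) / 2 * y k ^ 2 + C)
          ≤ ∑ k ∈ Finset.Icc (1:ℤ) (N:ℤ), Fint f k (y k) :=
        Finset.sum_le_sum (fun k hk => hF k hk (y k))
      have h2 : ∑ k ∈ Finset.Icc (1:ℤ) (N:ℤ), ((beta - eps) / 2 * y k ^ 2 + C)
          = (beta - eps) / 2 * S + N * C := by
        rw [Finset.sum_add_distrib, ← Finset.mul_sum, Finset.sum_const, Int.card_Icc, hSdef]
        have hcard : ((N:ℤ) + 1 - 1).toNat = N := by omega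
        rw [hcard, nsmul_eq_mul]
      linarith
    -- sign-dependent eigen bounds
    have hSnn : 0 ≤ S := by
      rw [hSdef]; exact Finset.sum_nonneg fun k _ => sq_nonneg _
    set ep : ℝ := (if 0 ≤ pmin then lam2 else 16) with hep
    set eq' : ℝ := (if qmax < 0 then lam1 else 4) with heq'
    have hP : ep * pmin / 2 * S
        ≤ pmin / 2 * (∑ k ∈ Finset.Icc (1:ℤ) ((N:ℤ)+2), (fd2 y (k-2)) ^ 2) := by
      by_cases hsp : 0 ≤ pmin
      · rw [hep, if_pos hsp]
        nlinarith [mul_le_mul_of_nonneg_left hWlow hsp]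
      · rw [hep, if_neg hsp]
        push_neg at hsp
        nlinarith [mul_le_mul_of_nonpos_left hWup (by linarith : pmin ≤ 0)]
    have hQ : qmax / 2 * (∑ k ∈ Finset.Icc (1:ℤ) ((N:ℤ)+1), (fd y (k-1)) ^ 2)
        ≤ eq' * qmax / 2 * S := by
      by_cases hsq : qmax < 0
      · rw [heq', if_pos hsq]
        nlinarith [mul_le_mul_of_nonpos_left hVlow (by linarith : qmax ≤ 0)]
      · rw [heq', if_neg hsq]
        push_neg at hsq
        nlinarith [mul_le_mul_of_nonneg_left hVup hsq]
    have hco : ep * pmin / 2 * S - eq' * qmax / 2 * S + (beta - eps) / 2 * S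
        = eps / 2 * S := by
      linear_combination (S/2) * halpha1 - S * heps
    unfold _root_.J
    linarith [hT1, hT2, hT3, hP, hQ, hco]
  refine ⟨main, ?_⟩
  intro C'
  refine ⟨(C' - N * C) / (eps / 2), ?_⟩
  intro y hy hR
  have h1 := main y hy
  have h2 : eps / 2 * ((C' - N * C) / (eps / 2)) = C' - N * C := by
    field_simp
  have h3 : eps / 2 * ((C' - N * C) / (eps / 2))
      ≤ eps / 2 * ∑ k ∈ Finset.Icc (1:ℤ) (N:ℤ), (y k) ^ 2 :=
    mul_le_mul_of_nonneg_left hR (by linarith)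
  linarith
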